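/- Let G be a random projection from ℝ^m to ℝ^d. If x ∈ ℝ^m is a unit vector (‖x‖ = 1) and t ≥ 1, then Pr(‖Gx‖ ≤ 1/t) ≥ (1/(e·t))^d. -/

import Mathlib

open MeasureTheory ProbabilityTheory
open scoped ENNReal NNReal Classical

open Real

set_option maxHeartbeats 1000000

section Helpers

lemma gaussAux_prod_eq {s r : ℝ≥0} (hs : s ≠ 0) (hr : r ≠ 0) (y : ℝ) (p : ℝ) :
    gaussianPDFReal 0 s p * gaussianPDFReal 0 r (y - p)
      = ((√(2*π*s))⁻¹ * (√(2*π*r))⁻¹ * rexp (-(y^2) / (2*(s+r))))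
        * rexp (-(((s : ℝ) + r)/(2*s*r)) * (p - s*y/(s+r))^2) := by
  have hs' : (0:ℝ) < s := lt_of_le_of_ne s.coe_nonneg (by exact_mod_cast (Ne.symm hs))
  have hr' : (0:ℝ) < r := lt_of_le_of_ne r.coe_nonneg (by exact_mod_cast (Ne.symm hr))
  have h4 : (s:ℝ) + r ≠ 0 := by positivity
  have hexp : -p^2/(2*(s:ℝ)) + -(y-p)^2/(2*(r:ℝ))
      = -(y^2)/(2*((s:ℝ)+r)) + -(((s:ℝ)+r)/(2*s*r))*(p - s*y/(s+r))^2 := by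
    field_simp
    ring
  simp only [gaussianPDFReal, sub_zero]
  rw [mul_mul_mul_comm, ← Real.exp_add, hexp, Real.exp_add]
  ring

lemma gaussPDFReal_conv {s r : ℝ≥0} (hs : s ≠ 0) (hr : r ≠ 0) (y : ℝ) :
    ∫ p, gaussianPDFReal 0 s p * gaussianPDFReal 0 r (y - p)
      = gaussianPDFReal 0 (s + r) y := by
  have hs' : (0:ℝ) < s := lt_of_le_of_ne s.coe_nonneg (by exact_mod_cast (Ne.symm hs))
  have hr' : (0:ℝ) < r := lt_of_le_of_ne r.coe_nonneg (by exact_mod_cast (Ne.symm hr))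
  have ha : (0:ℝ) < ((s:ℝ) + r)/(2*s*r) := by positivity
  simp_rw [gaussAux_prod_eq hs hr y]
  rw [integral_const_mul]
  rw [integral_sub_right_eq_self (fun p => rexp (-(((s : ℝ) + r)/(2*s*r)) * p^2)) ((s:ℝ)*y/(s+r))]
  rw [integral_gaussian]
  simp only [gaussianPDFReal, sub_zero]
  have hconst : (√(2*π*s))⁻¹ * (√(2*π*r))⁻¹ * √(π / (((s:ℝ) + r)/(2*s*r)))
      = (√(2*π*((s:ℝ)+r)))⁻¹ := by
    rw [← Real.sqrt_inv, ← Real.sqrt_inv, ← Real.sqrt_inv, ← Real.sqrt_mul (by positivity),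
      ← Real.sqrt_mul (by positivity)]
    congr 1
    have h4 : (s:ℝ) + r ≠ 0 := by positivity
    have hpi : π ≠ 0 := Real.pi_ne_zero
    field_simp
  push_cast
  calc (√(2*π*s))⁻¹ * (√(2*π*r))⁻¹ * rexp (-(y^2) / (2*((s:ℝ)+r))) * √(π / (((s:ℝ) + r)/(2*s*r)))
      = ((√(2*π*s))⁻¹ * (√(2*π*r))⁻¹ * √(π / (((s:ℝ) + r)/(2*s*r)))) * rexp (-(y^2) / (2*((s:ℝ)+r))) := by ring
    _ = (√(2*π*((s:ℝ)+r)))⁻¹ * rexp (-y^2 / (2*((s:ℝ)+r))) := by rw [hconst]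

lemma gaussianReal_conv (s r : ℝ≥0) :
    ((gaussianReal 0 s).prod (gaussianReal 0 r)).map (fun p : ℝ × ℝ => p.1 + p.2)
      = gaussianReal 0 (s + r) := by
  by_cases hs : s = 0
  · subst hs
    rw [zero_add, gaussianReal_zero_var, Measure.dirac_prod,
      Measure.map_map (by fun_prop) (by fun_prop)]
    simp [Function.comp_def]
  by_cases hr : r = 0
  · subst hr
    rw [add_zero, gaussianReal_zero_var, Measure.prod_dirac,
      Measure.map_map (by fun_prop) (by fun_prop)]
    simp [Function.comp_def]
  have hs' : (0:ℝ) < s := lt_of_le_of_ne s.coe_nonneg (by exact_mod_cast (Ne.symm hs))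
  have hr' : (0:ℝ) < r := lt_of_le_of_ne r.coe_nonneg (by exact_mod_cast (Ne.symm hr))
  have ha : (0:ℝ) < ((s:ℝ) + r)/(2*s*r) := by positivity
  have hsr : s + r ≠ 0 := by
    simp [add_eq_zero, hs, hr]
  ext S hS
  rw [Measure.map_apply (by fun_prop) hS,
    Measure.prod_apply (hS.preimage (by fun_prop))]
  have h1 : ∀ p : ℝ,
      gaussianReal 0 r (Prod.mk p ⁻¹' ((fun q : ℝ × ℝ => q.1 + q.2) ⁻¹' S))
        = ∫⁻ y in S, gaussianPDF 0 r (y - p) := by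
    intro p
    have hpre : (Prod.mk p ⁻¹' ((fun q : ℝ × ℝ => q.1 + q.2) ⁻¹' S))
        = (fun q => p + q) ⁻¹' S := rfl
    have htr : ∀ y, gaussianPDF (0 + p) r y = gaussianPDF 0 r (y - p) := by
      intro y
      simp only [gaussianPDF, gaussianPDFReal, zero_add, sub_zero]
    rw [hpre, ← Measure.map_apply (by fun_prop) hS, gaussianReal_map_const_add,
      gaussianReal_apply _ hr]
    exact setLIntegral_congr_fun hS (fun y _ => htr y)
  simp_rw [h1]
  rw [gaussianReal_of_var_ne_zero 0 hs,
    lintegral_withDensity_eq_lintegral_mul_non_measurable _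
      (measurable_gaussianPDF 0 s)
      (ae_of_all _ fun p => by simp [gaussianPDF, ENNReal.ofReal_lt_top])]
  have h2 : ∀ p : ℝ, gaussianPDF 0 s p * ∫⁻ y in S, gaussianPDF 0 r (y - p)
      = ∫⁻ y in S, gaussianPDF 0 s p * gaussianPDF 0 r (y - p) := by
    intro p
    rw [lintegral_const_mul _ (show Measurable fun y => gaussianPDF 0 r (y - p) from (measurable_gaussianPDF 0 r).comp (measurable_id.sub_const p))]
  simp only [Pi.mul_apply]
  simp_rw [h2]
  rw [lintegral_lintegral_swap (((measurable_gaussianPDF 0 s).comp measurable_fst).mul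
    ((measurable_gaussianPDF 0 r).comp (measurable_snd.sub measurable_fst))).aemeasurable]
  have h3 : ∀ y : ℝ, ∫⁻ p, gaussianPDF 0 s p * gaussianPDF 0 r (y - p)
      = gaussianPDF 0 (s + r) y := by
    intro y
    simp only [gaussianPDF]
    have hint : Integrable (fun p => gaussianPDFReal 0 s p * gaussianPDFReal 0 r (y - p)) := by
      have : (fun p => gaussianPDFReal 0 s p * gaussianPDFReal 0 r (y - p))
          = fun p => ((√(2*π*s))⁻¹ * (√(2*π*r))⁻¹ * rexp (-(y^2) / (2*(s+r))))
            * rexp (-(((s : ℝ) + r)/(2*s*r)) * (p - s*y/(s+r))^2) := by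
        ext p; exact gaussAux_prod_eq hs hr y p
      rw [this]
      exact (Integrable.comp_sub_right (integrable_exp_neg_mul_sq ha) _).const_mul _
    calc ∫⁻ p, ENNReal.ofReal (gaussianPDFReal 0 s p) * ENNReal.ofReal (gaussianPDFReal 0 r (y - p))
        = ∫⁻ p, ENNReal.ofReal (gaussianPDFReal 0 s p * gaussianPDFReal 0 r (y - p)) := by
          congr 1; ext p
          rw [ENNReal.ofReal_mul (gaussianPDFReal_nonneg 0 s p)]
      _ = ENNReal.ofReal (∫ p, gaussianPDFReal 0 s p * gaussianPDFReal 0 r (y - p)) := by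
          rw [← ofReal_integral_eq_lintegral_ofReal hint
            (ae_of_all _ fun p => mul_nonneg (gaussianPDFReal_nonneg 0 s p)
              (gaussianPDFReal_nonneg 0 r _))]
      _ = ENNReal.ofReal (gaussianPDFReal 0 (s + r) y) := by rw [gaussPDFReal_conv hs hr y]
  simp_rw [h3]
  rw [← gaussianReal_apply _ hsr S]

lemma pi_gaussian_map_sum (v : ℝ≥0) :
    ∀ (m : ℕ) (x : Fin m → ℝ),
      (Measure.pi fun _ : Fin m => gaussianReal 0 v).map (fun a => ∑ j, x j * a j)
        = gaussianReal 0 ((∑ j, x j ^ 2).toNNReal * v) := by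
  intro m
  induction m with
  | zero =>
      intro x
      have : (fun a : Fin 0 → ℝ => ∑ j, x j * a j) = fun _ => (0:ℝ) := by
        ext a; simp
      rw [this]
      simp only [Finset.univ_eq_empty, Finset.sum_empty, Real.toNNReal_zero, zero_mul,
        gaussianReal_zero_var]
      rw [Measure.map_const]
      simp
  | succ m ih =>
      intro x
      have hcomp : (fun a : Fin (m+1) → ℝ => ∑ j, x j * a j)
          = (fun p : ℝ × (Fin m → ℝ) => ((x 0 * ·) p.1) + ∑ j : Fin m, x j.succ * p.2 j)
            ∘ (MeasurableEquiv.piFinSuccAbove (fun _ : Fin (m+1) => ℝ) 0) := by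
        ext a
        simp [MeasurableEquiv.piFinSuccAbove, Fin.insertNthEquiv, Fin.removeNth,
          Fin.zero_succAbove, Fin.sum_univ_succ, Fin.tail]
      have hmeas1 : Measurable fun u : ℝ => x 0 * u := by fun_prop
      have hmeas2 : Measurable fun a : Fin m → ℝ => ∑ j : Fin m, x j.succ * a j := by
        exact Finset.measurable_sum _ fun j _ => (measurable_pi_apply j).const_mul _
      have hMP := measurePreserving_piFinSuccAbove (fun _ : Fin (m+1) => gaussianReal 0 v) 0
      rw [hcomp, ← Measure.map_map (show Measurable
          (fun p : ℝ × (Fin m → ℝ) => ((x 0 * ·) p.1) + ∑ j : Fin m, x j.succ * p.2 j) from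
          (hmeas1.comp measurable_fst).add (hmeas2.comp measurable_snd))
          (MeasurableEquiv.measurable _), hMP.map_eq]
      have hsplit : (fun p : ℝ × (Fin m → ℝ) => ((x 0 * ·) p.1) + ∑ j : Fin m, x j.succ * p.2 j)
          = (fun q : ℝ × ℝ => q.1 + q.2)
            ∘ (Prod.map (x 0 * ·) (fun a : Fin m → ℝ => ∑ j : Fin m, x j.succ * a j)) := rfl
      rw [hsplit, ← Measure.map_map (by fun_prop) (hmeas1.prodMap hmeas2),
        ← Measure.map_prod_map _ _ hmeas1 hmeas2, gaussianReal_map_const_mul (x 0),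
        ih (fun j => x j.succ)]
      simp only [mul_zero]
      rw [gaussianReal_conv]
      congr 1
      ext
      push_cast [Real.coe_toNNReal _ (Finset.sum_nonneg fun j _ => sq_nonneg (x j)),
        Real.coe_toNNReal _ (Finset.sum_nonneg fun (j : Fin m) _ => sq_nonneg (x j.succ))]
      rw [Fin.sum_univ_succ]
      push_cast
      ring

lemma gauss_interval_lower {v : ℝ≥0} (hv : v ≠ 0) {c : ℝ} (hc : 0 < c) :
    ENNReal.ofReal (2 * c * (√(2*π*v))⁻¹ * rexp (-(c^2) / (2*v)))
      ≤ gaussianReal 0 v {y | |y| ≤ c} := by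
  have hset : {y : ℝ | |y| ≤ c} = Set.Icc (-c) c := by
    ext y; simp [abs_le]
  rw [hset, gaussianReal_apply_eq_integral 0 hv]
  apply ENNReal.ofReal_le_ofReal
  have hlow : ∀ y ∈ Set.Icc (-c) c,
      (√(2*π*v))⁻¹ * rexp (-(c^2) / (2*v)) ≤ gaussianPDFReal 0 v y := by
    intro y hy
    simp only [gaussianPDFReal, sub_zero]
    apply mul_le_mul_of_nonneg_left _ (by positivity)
    apply Real.exp_le_exp.2
    have hy2 : y^2 ≤ c^2 := sq_le_sq' hy.1 hy.2
    have : (0:ℝ) < 2*v := by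
      have : (0:ℝ) < v := lt_of_le_of_ne v.coe_nonneg (by exact_mod_cast (Ne.symm hv))
      linarith
    exact (div_le_div_iff_of_pos_right this).2 (by linarith)
  calc 2 * c * (√(2*π*v))⁻¹ * rexp (-(c^2) / (2*v))
      = ∫ _ in Set.Icc (-c) c, (√(2*π*v))⁻¹ * rexp (-(c^2) / (2*v)) := by
        rw [setIntegral_const]
        simp [Real.volume_Icc]
        rw [max_eq_left (by linarith)]
        ring
    _ ≤ ∫ y in Set.Icc (-c) c, gaussianPDFReal 0 v y := by
        apply setIntegral_mono_on (integrableOn_const measure_Icc_lt_top.ne)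
          ((integrable_gaussianPDFReal 0 v).integrableOn) measurableSet_Icc hlow

end Helpers

noncomputable section

/-- The random projection map: apply a `d × m` matrix `A` to a point of `ℝ^m`. -/
def projMap {m d : ℕ} (A : Fin d → Fin m → ℝ) (x : EuclideanSpace ℝ (Fin m)) :
    EuclideanSpace ℝ (Fin d) :=
  WithLp.toLp 2 fun i => ∑ j, A i j * x j

/-- The distribution of a random projection matrix: i.i.d. `N(0, 1/d)` entries. -/
def projMeasure (m d : ℕ) : Measure (Fin d → Fin m → ℝ) :=
  Measure.pi fun _ => Measure.pi fun _ => gaussianReal 0 ((d : ℝ≥0))⁻¹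

/-- Proposition: anti-concentration of the norm of a projected unit
vector: for a unit vector `x` and `t ≥ 1`, `Pr(‖Gx‖ ≤ 1/t) ≥ (1/(e·t))^d`. -/
theorem projected_norm_small_probability_lower {m d : ℕ}
    (x : EuclideanSpace ℝ (Fin m)) (hx : ‖x‖ = 1) (t : ℝ) (ht : 1 ≤ t) :
    ENNReal.ofReal ((1 / (Real.exp 1 * t)) ^ d)
      ≤ projMeasure m d {A | ‖projMap A x‖ ≤ 1 / t} := by
  have ht0 : (0:ℝ) < t := lt_of_lt_of_le one_pos ht
  rcases Nat.eq_zero_or_pos d with hd | hd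
  · subst hd
    have h1 : {A : Fin 0 → Fin m → ℝ | ‖projMap A x‖ ≤ 1/t} = Set.univ := by
      ext A
      simp only [Set.mem_setOf_eq, Set.mem_univ, iff_true]
      have h0 : projMap A x = 0 := Subsingleton.elim _ _
      rw [h0, norm_zero]
      positivity
    have hP : IsProbabilityMeasure (projMeasure m 0) := by
      unfold projMeasure; infer_instance
    rw [h1, hP.measure_univ, pow_zero]
    simp
  -- main case
  have hD : (0:ℝ) < (d:ℝ) := by exact_mod_cast hd
  have hsD : (0:ℝ) < Real.sqrt d := Real.sqrt_pos.2 hD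
  set c : ℝ := 1/(t * Real.sqrt d) with hc_def
  have hc : 0 < c := by positivity
  set v : ℝ≥0 := ((d : ℝ≥0))⁻¹ with hv_def
  have hdne : (d:ℝ≥0) ≠ 0 := by
    simpa using Nat.pos_iff_ne_zero.1 hd
  have hv : v ≠ 0 := by simp [hv_def, hdne]
  have hvr : (v:ℝ) = ((d:ℝ))⁻¹ := by push_cast [hv_def]; norm_num
  -- sum of squares of x is 1
  have hxsum : ∑ j, x j ^ 2 = 1 := by
    have h1 : Real.sqrt (∑ j, x j ^ 2) = 1 := by
      rw [EuclideanSpace.norm_eq] at hx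
      simpa [Real.norm_eq_abs, sq_abs] using hx
    have hnn : (0:ℝ) ≤ ∑ j, x j ^ 2 := Finset.sum_nonneg fun j _ => sq_nonneg (x j)
    have h2 := Real.sq_sqrt hnn
    rw [h1] at h2
    simpa using h2.symm
  have hmeas : Measurable fun a : Fin m → ℝ => ∑ j, x j * a j :=
    Finset.measurable_sum _ fun j _ => (measurable_pi_apply j).const_mul _
  have hrow : (Measure.pi fun _ : Fin m => gaussianReal 0 v).map (fun a => ∑ j, x j * a j)
      = gaussianReal 0 v := by
    rw [pi_gaussian_map_sum, hxsum]
    simp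
  -- numeric bound
  have hnum : 1/(Real.exp 1 * t) ≤ 2 * c * (√(2*π*v))⁻¹ * rexp (-(c^2) / (2*v)) := by
    have he : (2.7182818283:ℝ) < Real.exp 1 := Real.exp_one_gt_d9
    have hpi : π < 3.15 := Real.pi_lt_d2
    have hpi0 : (0:ℝ) < π := Real.pi_pos
    have hE : (1:ℝ)/2 ≤ rexp (-(c^2) / (2*v)) := by
      have harg : -(c^2) / (2*(v:ℝ)) = -(1/(2*t^2)) := by
        rw [hvr, hc_def]
        have := Real.sq_sqrt hD.le
        field_simp
        nlinarith [this]
      rw [harg]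
      have h3 := Real.add_one_le_exp (-(1/(2*t^2)))
      have ht2 : (1:ℝ) ≤ t^2 := by nlinarith
      have h4 : 1/(2*t^2) ≤ 1/2 := by
        rw [div_le_div_iff₀ (by positivity) (by norm_num)]
        nlinarith
      nlinarith
    have hcoef : 2 * c * (√(2*π*(v:ℝ)))⁻¹ = 2/(t * √(2*π)) := by
      rw [hvr, hc_def]
      rw [show 2*π*((d:ℝ))⁻¹ = (2*π) * ((d:ℝ))⁻¹ by ring, Real.sqrt_mul (by positivity),
        Real.sqrt_inv]
      have h1 : Real.sqrt (2*π) ≠ 0 := by positivity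
      field_simp
    rw [hcoef]
    have hsqrt2pi : Real.sqrt (2*π) ≤ 2.6 := by
      rw [show (2.6:ℝ) = Real.sqrt (2.6^2) from (Real.sqrt_sq (by norm_num)).symm]
      exact Real.sqrt_le_sqrt (by nlinarith)
    have hsq0 : (0:ℝ) < Real.sqrt (2*π) := by positivity
    calc 1/(Real.exp 1 * t) ≤ 1/(t * Real.sqrt (2*π)) := by
          apply one_div_le_one_div_of_le (by positivity)
          calc t * Real.sqrt (2*π) ≤ t * 2.6 := by nlinarith
            _ ≤ Real.exp 1 * t := by nlinarith
      _ = 2/(t * Real.sqrt (2*π)) * (1/2) := by ring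
      _ ≤ 2/(t * Real.sqrt (2*π)) * rexp (-(c^2) / (2*v)) := by
          apply mul_le_mul_of_nonneg_left hE (by positivity)
  -- per-row bound
  set E : Set (Fin m → ℝ) := (fun a => ∑ j, x j * a j) ⁻¹' {y | |y| ≤ c} with hE_def
  have hsetmeas : MeasurableSet {y : ℝ | |y| ≤ c} := by
    have : {y : ℝ | |y| ≤ c} = Set.Icc (-c) c := by ext y; simp [abs_le]
    rw [this]; exact measurableSet_Icc
  have hEmeas : MeasurableSet E := hsetmeas.preimage hmeas
  have hErow : ENNReal.ofReal (1/(Real.exp 1 * t))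
      ≤ (Measure.pi fun _ : Fin m => gaussianReal 0 v) E := by
    rw [hE_def, ← Measure.map_apply hmeas hsetmeas, hrow]
    exact le_trans (ENNReal.ofReal_le_ofReal hnum) (gauss_interval_lower hv hc)
  -- inclusion
  have hsub : (Set.univ.pi fun _ : Fin d => E) ⊆ {A | ‖projMap A x‖ ≤ 1/t} := by
    intro A hA
    simp only [Set.mem_setOf_eq]
    have hAi : ∀ i : Fin d, |∑ j, A i j * x j| ≤ c := by
      intro i
      have := hA i (Set.mem_univ i)
      simpa [hE_def, mul_comm] using this
    rw [EuclideanSpace.norm_eq]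
    have hterm : ∀ i : Fin d, ‖projMap A x i‖ ^ 2 ≤ c^2 := by
      intro i
      rw [Real.norm_eq_abs]
      have : |projMap A x i| ≤ c := by simpa [projMap] using hAi i
      nlinarith [abs_nonneg (projMap A x i)]
    calc Real.sqrt (∑ i, ‖projMap A x i‖^2) ≤ Real.sqrt (∑ _i : Fin d, c^2) := by
          apply Real.sqrt_le_sqrt
          exact Finset.sum_le_sum fun i _ => hterm i
      _ = Real.sqrt ((d:ℝ) * c^2) := by rw [Finset.sum_const, Finset.card_univ, Fintype.card_fin, nsmul_eq_mul]
      _ = Real.sqrt d * c := by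
          rw [Real.sqrt_mul hD.le, Real.sqrt_sq hc.le]
      _ = 1/t := by
          rw [hc_def, mul_one_div, div_eq_div_iff (by positivity) (by positivity)]; ring
  refine le_trans ?_ (measure_mono hsub)
  have hpi_pi : projMeasure m d (Set.univ.pi fun _ : Fin d => E)
      = ((Measure.pi fun _ : Fin m => gaussianReal 0 v) E) ^ d := by
    rw [projMeasure, Measure.pi_pi]
    simp [Finset.prod_const]
    rfl
  rw [hpi_pi, ENNReal.ofReal_pow (by positivity)]
  exact pow_le_pow_left' hErow d
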